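/- Let u : [−2,2] → ℝ² be a function that is differentiable within [−2,2] at every t ∈ [−2,2], with u(−2) = (−3, 9·sin(−1/3)) and u'(t) = (1, g(u₁(t))) for all t ∈ [−2,2], where u₁ is the first component of u. Then u(t) = (t − 1, G(t − 1)) for all t ∈ [−2,2]; that is, the initial value problem u' = f ∘ u, u(−2) = (−3, 9·sin(−1/3)) with f(x, z) = (1, g(x)) has a unique solution on [−2,2]. -/

import Mathlib

open Set

/-- `g(x) = 2x sin(1/x) − cos(1/x)` for `x ≠ 0`, `g(0) = 0`. -/
noncomputable def gFun (x : ℝ) : ℝ :=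
  if x = 0 then 0 else 2 * x * Real.sin (1 / x) - Real.cos (1 / x)

/-- `G(x) = x² sin(1/x)` for `x ≠ 0`, `G(0) = 0`. -/
noncomputable def GFun (x : ℝ) : ℝ :=
  if x = 0 then 0 else x ^ 2 * Real.sin (1 / x)

lemma hGderiv (x : ℝ) : HasDerivAt GFun (gFun x) x := by
  rcases eq_or_ne x 0 with rfl | hx
  · rw [show gFun 0 = 0 from if_pos rfl]
    rw [hasDerivAt_iff_tendsto_slope]
    refine squeeze_zero_norm' (a := fun y : ℝ => |y|) ?_ ?_
    · filter_upwards [self_mem_nhdsWithin] with y (hy : y ≠ 0)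
      simp only [slope, vsub_eq_sub, sub_zero, GFun, if_neg hy, if_pos rfl, smul_eq_mul, if_true, sub_zero]
      rw [Real.norm_eq_abs]
      have h2 : y⁻¹ * (y ^ 2 * Real.sin (1 / y)) = y * Real.sin (1 / y) := by
        field_simp
      rw [h2, abs_mul]
      calc |y| * |Real.sin (1 / y)| ≤ |y| * 1 := by
            gcongr; exact Real.abs_sin_le_one _
        _ = |y| := mul_one _
    · simpa using (continuous_abs.tendsto' 0 0 (by simp)).mono_left nhdsWithin_le_nhds
  · have h1 : HasDerivAt (fun y : ℝ => y ^ 2 * Real.sin (1 / y))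
        (2 * x * Real.sin (1 / x) - Real.cos (1 / x)) x := by
      have hsin : HasDerivAt (fun y : ℝ => Real.sin (1 / y))
          (Real.cos (1 / x) * (-(1 / x ^ 2))) x := by
        have := (Real.hasDerivAt_sin (x⁻¹)).comp x (hasDerivAt_inv hx)
        simpa [one_div, Function.comp_def] using this.congr_deriv (by ring)
      have hsq : HasDerivAt (fun y : ℝ => y ^ 2) (2 * x) x := by
        simpa using hasDerivAt_pow 2 x
      have := hsq.mul hsin
      refine this.congr_deriv ?_
      have hx2 : x ^ 2 * (1 / x ^ 2) = 1 := by field_simp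
      linear_combination (-Real.cos (1 / x)) * hx2
    have heq : (fun y : ℝ => y ^ 2 * Real.sin (1 / y)) =ᶠ[nhds x] GFun := by
      filter_upwards [isOpen_ne.mem_nhds hx] with y hy
      simp [GFun, if_neg hy]
    rw [show gFun x = 2 * x * Real.sin (1 / x) - Real.cos (1 / x) from if_neg hx]
    exact h1.congr_of_eventuallyEq heq.symm


/-- Uniqueness: every solution on `[−2,2]` of the IVP `u' = (1, g(u₁))`,
`u(−2) = (−3, 9 sin(−1/3))` coincides with `t ↦ (t − 1, G(t − 1))`. -/
theorem stmt_12 (u : ℝ → ℝ × ℝ)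
    (hu0 : u (-2) = (-3, 9 * Real.sin (-(1 / 3))))
    (hu : ∀ t ∈ Icc (-2 : ℝ) 2,
      HasDerivWithinAt u (1, gFun ((u t).1)) (Icc (-2 : ℝ) 2) t) :
    ∀ t ∈ Icc (-2 : ℝ) 2, u t = (t - 1, GFun (t - 1)) := by
  have key : ∀ t ∈ Ico (-2:ℝ) 2,
      HasDerivWithinAt u (1, gFun ((u t).1)) (Ici t) t := fun t ht =>
    (hu t (Ico_subset_Icc_self ht)).mono_of_mem_nhdsWithin (Icc_mem_nhdsGE_of_mem ht)
  have ucont : ContinuousOn u (Icc (-2:ℝ) 2) := fun t ht =>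
    (hu t ht).continuousWithinAt
  have hfst : ∀ t ∈ Icc (-2:ℝ) 2, (u t).1 = t - 1 := by
    apply eq_of_has_deriv_right_eq (f' := fun _ => (1:ℝ))
    · intro t ht
      have h := (ContinuousLinearMap.fst ℝ ℝ ℝ).hasFDerivAt.comp_hasDerivWithinAt t
        (key t ht)
      simpa [Function.comp_def] using h
    · intro t ht
      simpa using ((hasDerivAt_id t).sub_const 1).hasDerivWithinAt (s := Ici t)
    · exact ucont.fst
    · exact (continuous_id.sub continuous_const).continuousOn
    · rw [hu0]; norm_num
  have hsnd : ∀ t ∈ Icc (-2:ℝ) 2, (u t).2 = GFun (t - 1) := by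
    apply eq_of_has_deriv_right_eq (f' := fun t => gFun (t - 1))
    · intro t ht
      have h := (ContinuousLinearMap.snd ℝ ℝ ℝ).hasFDerivAt.comp_hasDerivWithinAt t
        (key t ht)
      have := hfst t (Ico_subset_Icc_self ht)
      simpa [this, Function.comp_def] using h
    · intro t ht
      have h := ((hGderiv (t - 1)).comp t ((hasDerivAt_id t).sub_const 1)).hasDerivWithinAt
        (s := Ici t)
      simpa [Function.comp_def] using h
    · exact ucont.snd
    · exact fun t _ =>
        ((hGderiv (t - 1)).comp t ((hasDerivAt_id t).sub_const 1)).continuousAt.continuousWithinAt (f := GFun ∘ fun x => id x - 1)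
    · rw [hu0]
      norm_num [GFun]
  intro t ht
  rw [Prod.ext_iff]
  exact ⟨hfst t ht, hsnd t ht⟩
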